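/- arXiv:2509.07921 — 5 statements merged into one kernel-verified Lean document; each statement's English description precedes it below -/
import Mathlib

section
/- The string differential on the middle algebra squares to zero: δ^M_str ∘ δ^M_str = 0 on A^M. -/
open MvPolynomial

/-- Raw generator names for the middle algebra. -/
inductive MGenRaw (n : ℕ) : Type
  | aL (i j : Fin n) : MGenRaw n
  | aR (i j : Fin n) : MGenRaw n
  | bL (i j : Fin n) : MGenRaw n
  | bR (i j : Fin n) : MGenRaw n

/-- Validity of a raw generator name, given the two pairings. -/
def MGenValid {n : ℕ} (sL sR : Equiv.Perm (Fin n)) : MGenRaw n → Prop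
  | .aL i j => i < j
  | .aR i j => i < j
  | .bL i j => i < j ∧ sL i = j
  | .bR i j => i < j ∧ sR i = j

/-- Generators of the middle algebra `A^M`. -/
def MGen (n : ℕ) (sL sR : Equiv.Perm (Fin n)) : Type :=
  {g : MGenRaw n // MGenValid sL sR g}

/-- The middle algebra `A^M`: the free commutative unital `𝔽₂`-algebra on the generators. -/
abbrev AM (n : ℕ) (sL sR : Equiv.Perm (Fin n)) : Type :=
  MvPolynomial (MGen n sL sR) (ZMod 2)

/-- The generator `α^L_{ij}` (or `0` if `¬ i < j`). -/
noncomputable def genAL {n : ℕ} (sL sR : Equiv.Perm (Fin n)) (i j : Fin n) : AM n sL sR :=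
  if h : i < j then X (⟨MGenRaw.aL i j, h⟩ : MGen n sL sR) else 0

/-- The generator `α^R_{ij}` (or `0` if `¬ i < j`). -/
noncomputable def genAR {n : ℕ} (sL sR : Equiv.Perm (Fin n)) (i j : Fin n) : AM n sL sR :=
  if h : i < j then X (⟨MGenRaw.aR i j, h⟩ : MGen n sL sR) else 0

/-- The generator `β^L_{ij}` (or `0` if invalid). -/
noncomputable def genBL {n : ℕ} (sL sR : Equiv.Perm (Fin n)) (i j : Fin n) : AM n sL sR :=
  if h : i < j ∧ sL i = j then X (⟨MGenRaw.bL i j, h⟩ : MGen n sL sR) else 0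

/-- The generator `β^R_{ij}` (or `0` if invalid). -/
noncomputable def genBR {n : ℕ} (sL sR : Equiv.Perm (Fin n)) (i j : Fin n) : AM n sL sR :=
  if h : i < j ∧ sR i = j then X (⟨MGenRaw.bR i j, h⟩ : MGen n sL sR) else 0

/-- The path `1, β^R(1), β^L(β^R(1)), …` (with `1` rendered as `0 : Fin n`). -/
def pathSeq {n : ℕ} [NeZero n] (sL sR : Equiv.Perm (Fin n)) : ℕ → Fin n
  | 0 => 0
  | k + 1 => if k % 2 = 0 then sR (pathSeq sL sR k) else sL (pathSeq sL sR k)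

/-- The β-generator traversed at step `k` of the path (indices in increasing order). -/
noncomputable def stepGen {n : ℕ} [NeZero n] (sL sR : Equiv.Perm (Fin n)) (k : ℕ) :
    AM n sL sR :=
  if k % 2 = 0 then
    genBR sL sR (min (pathSeq sL sR k) (pathSeq sL sR (k + 1)))
      (max (pathSeq sL sR k) (pathSeq sL sR (k + 1)))
  else
    genBL sL sR (min (pathSeq sL sR k) (pathSeq sL sR (k + 1)))
      (max (pathSeq sL sR k) (pathSeq sL sR (k + 1)))

/-- `γ_i`: the sum of the β-generators along the path from `1` to the first occurrence of `i`. -/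
noncomputable def gammaEl {n : ℕ} [NeZero n] (sL sR : Equiv.Perm (Fin n))
    (hvisit : ∀ i : Fin n, ∃ m, pathSeq sL sR m = i) (i : Fin n) : AM n sL sR :=
  ∑ k ∈ Finset.range (Nat.find (hvisit i)), stepGen sL sR k

/-- Values of the string differential `δ^M_str` on generators. -/
noncomputable def deltaStrVal {n : ℕ} [NeZero n] (sL sR : Equiv.Perm (Fin n))
    (hvisit : ∀ i : Fin n, ∃ m, pathSeq sL sR m = i) : MGen n sL sR → AM n sL sR :=
  fun g =>
    match g.1 with
    | .aR i j =>
        (gammaEl sL sR hvisit i + gammaEl sL sR hvisit j) * genAR sL sR i j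
          + ∑ k : Fin n, if i < k ∧ k < j then genAR sL sR i k * genAR sL sR k j else 0
    | .aL i j =>
        (gammaEl sL sR hvisit i + gammaEl sL sR hvisit j) * genAL sL sR i j
          + ∑ k : Fin n, if i < k ∧ k < j then genAL sL sR i k * genAL sL sR k j else 0
    | .bR i j => genBR sL sR i j ^ 2
    | .bL i j => genBL sL sR i j ^ 2

/-- The common value of `d^M_SFT` on the β-generators `β^x_{ij}`. -/
noncomputable def betaSFTVal {n : ℕ} (sL sR : Equiv.Perm (Fin n)) (i j : Fin n) : AM n sL sR :=
  (∑ k : Fin n, if k < i then genAL sL sR k i * genAR sL sR k i else 0)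
    + (∑ k : Fin n, if i < k ∧ k ≠ j then genAL sL sR i k * genAR sL sR i k else 0)
    + (∑ k : Fin n, if k < j ∧ k ≠ i then genAL sL sR k j * genAR sL sR k j else 0)
    + (∑ k : Fin n, if j < k then genAL sL sR j k * genAR sL sR j k else 0)

/-- Values of the SFT differential `d^M_SFT` on generators. -/
noncomputable def dSFTVal {n : ℕ} (sL sR : Equiv.Perm (Fin n)) : MGen n sL sR → AM n sL sR :=
  fun g =>
    match g.1 with
    | .aR i j =>
        (∑ k : Fin n, if j < k then genAR sL sR i k * genAL sL sR j k else 0)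
          + (∑ k : Fin n, if k < i then genAR sL sR k j * genAL sL sR k i else 0)
    | .aL i j =>
        (∑ k : Fin n, if j < k then genAL sL sR i k * genAR sL sR j k else 0)
          + (∑ k : Fin n, if k < i then genAL sL sR k j * genAR sL sR k i else 0)
    | .bL i j => betaSFTVal sL sR i j
    | .bR i j => betaSFTVal sL sR i j

/-- The prescribed values of the SFT bracket on pairs of generators. -/
noncomputable def mBrVal {n : ℕ} (sL sR : Equiv.Perm (Fin n)) :
    MGen n sL sR → MGen n sL sR → AM n sL sR :=
  fun g g' =>
    match g.1, g'.1 with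
    | .aL i j, .aL k l =>
        if j = k then genAL sL sR i l else if i = l then genAL sL sR k j else 0
    | .aR i j, .aR k l =>
        if j = k then genAR sL sR i l else if i = l then genAR sL sR k j else 0
    | .aL i j, .bL k l =>
        if Xor (i = k ∨ i = l) (j = k ∨ j = l) then genAL sL sR i j else 0
    | .bL k l, .aL i j =>
        if Xor (i = k ∨ i = l) (j = k ∨ j = l) then genAL sL sR i j else 0
    | .aR i j, .bR k l =>
        if Xor (i = k ∨ i = l) (j = k ∨ j = l) then genAR sL sR i j else 0
    | .bR k l, .aR i j =>
        if Xor (i = k ∨ i = l) (j = k ∨ j = l) then genAR sL sR i j else 0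
    | _, _ => 0

/-- `Br` is *the* SFT bracket: the symmetric `𝔽₂`-bilinear operation on `A^M` satisfying the
Leibniz rule in each variable and taking the prescribed values on generators. -/
def IsSFTBracket {n : ℕ} (sL sR : Equiv.Perm (Fin n))
    (Br : AM n sL sR → AM n sL sR → AM n sL sR) : Prop :=
  (∀ x y, Br x y = Br y x) ∧
    (∀ x y z, Br x (y + z) = Br x y + Br x z) ∧
    (∀ x y z, Br x (y * z) = Br x y * z + y * Br x z) ∧
    (∀ g g' : MGen n sL sR, Br (X g) (X g') = mBrVal sL sR g g')

/-- The Hamiltonian `h^M = Σ_{i<j} α^L_{ij} α^R_{ij}`. -/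
noncomputable def hamM {n : ℕ} (sL sR : Equiv.Perm (Fin n)) : AM n sL sR :=
  ∑ i : Fin n, ∑ j : Fin n, if i < j then genAL sL sR i j * genAR sL sR i j else 0

/-- The quadratic Hamiltonian `h^M_2`. -/
noncomputable def hamM2 {n : ℕ} (sL sR : Equiv.Perm (Fin n)) : AM n sL sR :=
  (∑ i : Fin n, ∑ k : Fin n, ∑ j : Fin n,
      if i < k ∧ k < j then genAR sL sR i k * genAR sL sR k j * genAL sL sR i j else 0)
    + (∑ i : Fin n, ∑ k : Fin n, ∑ j : Fin n,
      if i < k ∧ k < j then genAL sL sR i k * genAL sL sR k j * genAR sL sR i j else 0)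

/-- Maslov weights of generators, given a Maslov potential `μ`. -/
def mWeight {n : ℕ} (sL sR : Equiv.Perm (Fin n)) (μ : Fin n → ℤ) : MGen n sL sR → ℤ :=
  fun g =>
    match g.1 with
    | .aL i j => μ i - μ j - 1
    | .aR i j => μ j - μ i - 1
    | .bL _ _ => -1
    | .bR _ _ => -1

section AuxMiddle

variable {n : ℕ} [NeZero n] {sL sR : Equiv.Perm (Fin n)}

omit [NeZero n] in
lemma am_add_self (x : AM n sL sR) : x + x = 0 := by
  have h : (2 : ZMod 2) • x = x + x := two_smul (ZMod 2) x
  have h2 : (2 : ZMod 2) = 0 := by decide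
  rw [h2, zero_smul] at h
  exact h.symm

omit [NeZero n] in
lemma am_sq_add (a b : AM n sL sR) : (a + b) ^ 2 = a ^ 2 + b ^ 2 := by
  have h : (a + b) ^ 2 = a ^ 2 + b ^ 2 + (a * b + a * b) := by ring
  rw [h, am_add_self, add_zero]

omit [NeZero n] in
lemma am_sq_sum {ι : Type*} (s : Finset ι) (f : ι → AM n sL sR) :
    (∑ i ∈ s, f i) ^ 2 = ∑ i ∈ s, f i ^ 2 := by
  induction s using Finset.cons_induction with
  | empty => simp
  | cons a s ha ih => rw [Finset.sum_cons, Finset.sum_cons, am_sq_add, ih]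

/-- Abbreviation for the quadratic sum appearing in the string differential. -/
noncomputable def auxS {n : ℕ} {sL sR : Equiv.Perm (Fin n)}
    (A : Fin n → Fin n → AM n sL sR) (a b : Fin n) : AM n sL sR :=
  ∑ k : Fin n, if a < k ∧ k < b then A a k * A k b else 0

variable (hvisit : ∀ i : Fin n, ∃ m, pathSeq sL sR m = i)
  (Dstr : Derivation (ZMod 2) (AM n sL sR) (AM n sL sR))
  (hDstr : ∀ g : MGen n sL sR, Dstr (X g) = deltaStrVal sL sR hvisit g)

include hvisit hDstr

lemma D_genBR (i j : Fin n) : Dstr (genBR sL sR i j) = genBR sL sR i j ^ 2 := by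
  by_cases h : i < j ∧ sR i = j
  · have e : genBR sL sR i j = X (⟨MGenRaw.bR i j, h⟩ : MGen n sL sR) := dif_pos h
    calc Dstr (genBR sL sR i j) = deltaStrVal sL sR hvisit ⟨MGenRaw.bR i j, h⟩ := by
          rw [e]; exact hDstr _
      _ = genBR sL sR i j ^ 2 := rfl
  · have e : genBR sL sR i j = 0 := dif_neg h
    rw [e, map_zero]; ring

lemma D_genBL (i j : Fin n) : Dstr (genBL sL sR i j) = genBL sL sR i j ^ 2 := by
  by_cases h : i < j ∧ sL i = j
  · have e : genBL sL sR i j = X (⟨MGenRaw.bL i j, h⟩ : MGen n sL sR) := dif_pos h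
    calc Dstr (genBL sL sR i j) = deltaStrVal sL sR hvisit ⟨MGenRaw.bL i j, h⟩ := by
          rw [e]; exact hDstr _
      _ = genBL sL sR i j ^ 2 := rfl
  · have e : genBL sL sR i j = 0 := dif_neg h
    rw [e, map_zero]; ring

lemma D_stepGen (k : ℕ) : Dstr (stepGen sL sR k) = stepGen sL sR k ^ 2 := by
  unfold stepGen
  split
  · exact D_genBR hvisit Dstr hDstr _ _
  · exact D_genBL hvisit Dstr hDstr _ _

lemma D_gamma (i : Fin n) :
    Dstr (gammaEl sL sR hvisit i) = gammaEl sL sR hvisit i ^ 2 := by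
  unfold gammaEl
  rw [map_sum, am_sq_sum]
  exact Finset.sum_congr rfl fun k _ => D_stepGen hvisit Dstr hDstr k

lemma D_genAR (i j : Fin n) :
    Dstr (genAR sL sR i j)
      = (gammaEl sL sR hvisit i + gammaEl sL sR hvisit j) * genAR sL sR i j
        + auxS (genAR sL sR) i j := by
  by_cases h : i < j
  · have e : genAR sL sR i j = X (⟨MGenRaw.aR i j, h⟩ : MGen n sL sR) := dif_pos h
    calc Dstr (genAR sL sR i j) = deltaStrVal sL sR hvisit ⟨MGenRaw.aR i j, h⟩ := by
          rw [e]; exact hDstr _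
      _ = _ := rfl
  · have e : genAR sL sR i j = 0 := dif_neg h
    rw [e, map_zero, mul_zero, zero_add]
    refine (Finset.sum_eq_zero fun k _ => ?_).symm
    rw [if_neg]; rintro ⟨h1, h2⟩; exact h (h1.trans h2)

lemma D_genAL (i j : Fin n) :
    Dstr (genAL sL sR i j)
      = (gammaEl sL sR hvisit i + gammaEl sL sR hvisit j) * genAL sL sR i j
        + auxS (genAL sL sR) i j := by
  by_cases h : i < j
  · have e : genAL sL sR i j = X (⟨MGenRaw.aL i j, h⟩ : MGen n sL sR) := dif_pos h
    calc Dstr (genAL sL sR i j) = deltaStrVal sL sR hvisit ⟨MGenRaw.aL i j, h⟩ := by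
          rw [e]; exact hDstr _
      _ = _ := rfl
  · have e : genAL sL sR i j = 0 := dif_neg h
    rw [e, map_zero, mul_zero, zero_add]
    refine (Finset.sum_eq_zero fun k _ => ?_).symm
    rw [if_neg]; rintro ⟨h1, h2⟩; exact h (h1.trans h2)

omit hvisit hDstr in
lemma D_key (γ : Fin n → AM n sL sR) (A : Fin n → Fin n → AM n sL sR)
    (hγ : ∀ i, Dstr (γ i) = γ i ^ 2)
    (hA : ∀ i j, Dstr (A i j) = (γ i + γ j) * A i j + auxS A i j)
    (i j : Fin n) :
    Dstr ((γ i + γ j) * A i j + auxS A i j) = 0 := by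
  -- derivative of the quadratic sum
  have hDS : ∀ a b : Fin n, Dstr (auxS A a b)
      = (γ a + γ b) * auxS A a b
        + ∑ k : Fin n, if a < k ∧ k < b then (auxS A a k * A k b + A a k * auxS A k b) else 0 := by
    intro a b
    have e1 : Dstr (auxS A a b) = ∑ k : Fin n, if a < k ∧ k < b then
        ((γ a + γ b) * (A a k * A k b) + (auxS A a k * A k b + A a k * auxS A k b)) else 0 := by
      have e0 : auxS A a b = ∑ k : Fin n, if a < k ∧ k < b then A a k * A k b else 0 := rfl
      rw [e0, map_sum]
      refine Finset.sum_congr rfl fun k _ => ?_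
      by_cases hk : a < k ∧ k < b
      · rw [if_pos hk, if_pos hk, Derivation.leibniz, smul_eq_mul, smul_eq_mul,
          hA a k, hA k b]
        have : A a k * ((γ k + γ b) * A k b + auxS A k b)
              + A k b * ((γ a + γ k) * A a k + auxS A a k)
            = (γ a + γ b) * (A a k * A k b) + (auxS A a k * A k b + A a k * auxS A k b)
              + (γ k * (A a k * A k b) + γ k * (A a k * A k b)) := by ring
        rw [this, am_add_self, add_zero]
      · rw [if_neg hk, if_neg hk, map_zero]
    have e2 : ∀ k : Fin n, (if a < k ∧ k < b then
        ((γ a + γ b) * (A a k * A k b) + (auxS A a k * A k b + A a k * auxS A k b)) else 0)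
        = (γ a + γ b) * (if a < k ∧ k < b then A a k * A k b else 0)
          + (if a < k ∧ k < b then (auxS A a k * A k b + A a k * auxS A k b) else 0) := by
      intro k; split <;> simp
    rw [e1, Finset.sum_congr rfl fun k _ => e2 k, Finset.sum_add_distrib, ← Finset.mul_sum]
    rfl
  -- main computation
  rw [map_add, Derivation.leibniz, smul_eq_mul, smul_eq_mul, hA i j, hDS i j,
    map_add, hγ i, hγ j]
  have e3 : (γ i + γ j) * ((γ i + γ j) * A i j + auxS A i j) + A i j * (γ i ^ 2 + γ j ^ 2)
      + ((γ i + γ j) * auxS A i j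
        + ∑ k : Fin n, if i < k ∧ k < j then (auxS A i k * A k j + A i k * auxS A k j) else 0)
      = (∑ k : Fin n, if i < k ∧ k < j then (auxS A i k * A k j + A i k * auxS A k j) else 0)
        + ((γ i ^ 2 + γ j ^ 2) * A i j + (γ i + γ j) ^ 2 * A i j)
        + ((γ i + γ j) * auxS A i j + (γ i + γ j) * auxS A i j) := by ring
  rw [e3, am_sq_add, am_add_self, am_add_self, add_zero, add_zero]
  -- the remaining double sum vanishes by symmetry
  have h1 : ∀ k : Fin n, (if i < k ∧ k < j then auxS A i k * A k j else 0)
      = ∑ l : Fin n, if i < l ∧ l < k ∧ k < j then A i l * A l k * A k j else 0 := by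
    intro k
    by_cases hk : i < k ∧ k < j
    · rw [if_pos hk,
        show auxS A i k = ∑ l : Fin n, if i < l ∧ l < k then A i l * A l k else 0 from rfl,
        Finset.sum_mul]
      refine Finset.sum_congr rfl fun l _ => ?_
      by_cases hl : i < l ∧ l < k
      · rw [if_pos hl, if_pos ⟨hl.1, hl.2, hk.2⟩]
      · rw [if_neg hl, zero_mul, if_neg fun hc => hl ⟨hc.1, hc.2.1⟩]
    · rw [if_neg hk]
      refine (Finset.sum_eq_zero fun l _ => ?_).symm
      rw [if_neg fun hc => hk ⟨hc.1.trans hc.2.1, hc.2.2⟩]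
  have h2 : ∀ k : Fin n, (if i < k ∧ k < j then A i k * auxS A k j else 0)
      = ∑ l : Fin n, if i < k ∧ k < l ∧ l < j then A i k * A k l * A l j else 0 := by
    intro k
    by_cases hk : i < k ∧ k < j
    · rw [if_pos hk,
        show auxS A k j = ∑ l : Fin n, if k < l ∧ l < j then A k l * A l j else 0 from rfl,
        Finset.mul_sum]
      refine Finset.sum_congr rfl fun l _ => ?_
      by_cases hl : k < l ∧ l < j
      · rw [if_pos hl, if_pos ⟨hk.1, hl⟩, mul_assoc]
      · rw [if_neg hl, mul_zero, if_neg fun hc => hl hc.2]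
    · rw [if_neg hk]
      refine (Finset.sum_eq_zero fun l _ => ?_).symm
      rw [if_neg fun hc => hk ⟨hc.1, hc.2.1.trans hc.2.2⟩]
  have e4 : ∀ k : Fin n, (if i < k ∧ k < j then (auxS A i k * A k j + A i k * auxS A k j) else 0)
      = (if i < k ∧ k < j then auxS A i k * A k j else 0)
        + (if i < k ∧ k < j then A i k * auxS A k j else 0) := by
    intro k; split <;> simp
  have hcomm : (∑ k : Fin n, ∑ l : Fin n,
        if i < k ∧ k < l ∧ l < j then A i k * A k l * A l j else 0)
      = ∑ k : Fin n, ∑ l : Fin n,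
        if i < l ∧ l < k ∧ k < j then A i l * A l k * A k j else 0 :=
    Finset.sum_comm
  rw [Finset.sum_congr rfl fun k _ => e4 k, Finset.sum_add_distrib,
    Finset.sum_congr rfl fun k _ => h1 k, Finset.sum_congr rfl fun k _ => h2 k,
    hcomm]
  exact am_add_self _

end AuxMiddle
/-- The string differential on the middle algebra squares to zero. -/
theorem middle_deltaStr_squared_zero {n : ℕ} [NeZero n] (hn2 : 2 ≤ n) (hnEven : Even n)
    (sL sR : Equiv.Perm (Fin n))
    (hsLne : ∀ i, sL i ≠ i) (hsLinv : ∀ i, sL (sL i) = i)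
    (hsRne : ∀ i, sR i ≠ i) (hsRinv : ∀ i, sR (sR i) = i)
    (hvisit : ∀ i : Fin n, ∃ m, pathSeq sL sR m = i)
    (Dstr : Derivation (ZMod 2) (AM n sL sR) (AM n sL sR))
    (hDstr : ∀ g : MGen n sL sR, Dstr (X g) = deltaStrVal sL sR hvisit g) :
    ∀ x : AM n sL sR, Dstr (Dstr x) = 0 := by
  have hdd : ∀ g : MGen n sL sR, Dstr (Dstr (X g)) = 0 := by
    intro g
    rw [hDstr]
    obtain ⟨graw, hval⟩ := g
    cases graw with
    | aR i j =>
      exact D_key Dstr (gammaEl sL sR hvisit) (genAR sL sR)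
        (D_gamma hvisit Dstr hDstr) (D_genAR hvisit Dstr hDstr) i j
    | aL i j =>
      exact D_key Dstr (gammaEl sL sR hvisit) (genAL sL sR)
        (D_gamma hvisit Dstr hDstr) (D_genAL hvisit Dstr hDstr) i j
    | bR i j =>
      show Dstr (genBR sL sR i j ^ 2) = 0
      rw [sq, Derivation.leibniz, smul_eq_mul]
      exact am_add_self _
    | bL i j =>
      show Dstr (genBL sL sR i j ^ 2) = 0
      rw [sq, Derivation.leibniz, smul_eq_mul]
      exact am_add_self _
  intro x
  induction x using MvPolynomial.induction_on with
  | C a =>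
    rw [show (C a : AM n sL sR) = algebraMap (ZMod 2) _ a from rfl,
      Derivation.map_algebraMap, map_zero]
  | add p q hp hq => rw [map_add, map_add, hp, hq, add_zero]
  | mul_X p s hp =>
    simp only [Derivation.leibniz, smul_eq_mul, map_add, hp, hdd s, mul_zero,
      zero_add, add_zero]
    rw [mul_comm (Dstr (X s)) (Dstr p)]
    exact am_add_self _
end

section
/- The string differential of the Hamiltonian equals the quadratic Hamiltonian: δ^M_str(h^M) = h^M_2. -/
open MvPolynomial

lemma char2_helper {R : Type*} [CommRing R] [CharP R 2] (a b g SR SL : R) :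
    a * (g * b + SR) + b * (g * a + SL) = SR * a + SL * b := by
  linear_combination CharTwo.add_self_eq_zero (g * a * b)

/-- `δ^M_str(h^M) = h^M_2`. -/
theorem middle_deltaStr_ham {n : ℕ} [NeZero n] (hn2 : 2 ≤ n) (hnEven : Even n)
    (sL sR : Equiv.Perm (Fin n))
    (hsLne : ∀ i, sL i ≠ i) (hsLinv : ∀ i, sL (sL i) = i)
    (hsRne : ∀ i, sR i ≠ i) (hsRinv : ∀ i, sR (sR i) = i)
    (hvisit : ∀ i : Fin n, ∃ m, pathSeq sL sR m = i)
    (Dstr : Derivation (ZMod 2) (AM n sL sR) (AM n sL sR))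
    (hDstr : ∀ g : MGen n sL sR, Dstr (X g) = deltaStrVal sL sR hvisit g) :
    Dstr (hamM sL sR) = hamM2 sL sR := by
  classical
  have key : ∀ i j : Fin n,
      Dstr (if i < j then genAL sL sR i j * genAR sL sR i j else 0)
        = (∑ k : Fin n, if i < k ∧ k < j then
            genAR sL sR i k * genAR sL sR k j * genAL sL sR i j else 0)
          + (∑ k : Fin n, if i < k ∧ k < j then
            genAL sL sR i k * genAL sL sR k j * genAR sL sR i j else 0) := by
    intro i j
    split_ifs with h
    · have hL : genAL sL sR i j = X (⟨MGenRaw.aL i j, h⟩ : MGen n sL sR) := dif_pos h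
      have hR : genAR sL sR i j = X (⟨MGenRaw.aR i j, h⟩ : MGen n sL sR) := dif_pos h
      have hdL : Dstr (genAL sL sR i j)
          = (gammaEl sL sR hvisit i + gammaEl sL sR hvisit j) * genAL sL sR i j
            + ∑ k : Fin n, if i < k ∧ k < j then genAL sL sR i k * genAL sL sR k j else 0 := by
        conv_lhs => rw [hL]
        exact hDstr _
      have hdR : Dstr (genAR sL sR i j)
          = (gammaEl sL sR hvisit i + gammaEl sL sR hvisit j) * genAR sL sR i j
            + ∑ k : Fin n, if i < k ∧ k < j then genAR sL sR i k * genAR sL sR k j else 0 := by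
        conv_lhs => rw [hR]
        exact hDstr _
      rw [Derivation.leibniz, hdL, hdR, smul_eq_mul, smul_eq_mul]
      have hsum1 : (∑ k : Fin n, if i < k ∧ k < j then
          genAR sL sR i k * genAR sL sR k j * genAL sL sR i j else 0)
          = (∑ k : Fin n, if i < k ∧ k < j then
            genAR sL sR i k * genAR sL sR k j else 0) * genAL sL sR i j := by
        rw [Finset.sum_mul]
        exact Finset.sum_congr rfl fun k _ => by split_ifs <;> simp
      have hsum2 : (∑ k : Fin n, if i < k ∧ k < j then
          genAL sL sR i k * genAL sL sR k j * genAR sL sR i j else 0)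
          = (∑ k : Fin n, if i < k ∧ k < j then
            genAL sL sR i k * genAL sL sR k j else 0) * genAR sL sR i j := by
        rw [Finset.sum_mul]
        exact Finset.sum_congr rfl fun k _ => by split_ifs <;> simp
      rw [hsum1, hsum2]
      exact char2_helper _ _ _ _ _
    · rw [map_zero]
      rw [Finset.sum_eq_zero, Finset.sum_eq_zero, add_zero]
      all_goals
        intro k _
        rw [if_neg]
        rintro ⟨h1, h2⟩
        exact h (h1.trans h2)
  unfold hamM
  rw [map_sum]
  simp_rw [map_sum, key, Finset.sum_add_distrib]
  unfold hamM2
  congr 1 <;> exact Finset.sum_congr rfl fun i _ => Finset.sum_comm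
end

section
/- The SFT bracket on the left algebra satisfies the Jacobi identity: for all x, y, z ∈ A^L, {x, {y, z}} + {y, {z, x}} + {z, {x, y}} = 0. -/
open MvPolynomial

/-- Raw generator names for the left algebra `A^L`: `p_c`, `q_c` for `c ∈ C`, `α_{ij}`,
`β_{ij}`, and `t`, `t⁻¹`. -/
inductive LGenRaw (n : ℕ) (C : Type) : Type
  | p (c : C) : LGenRaw n C
  | q (c : C) : LGenRaw n C
  | a (i j : Fin n) : LGenRaw n C
  | b (i j : Fin n) : LGenRaw n C
  | t : LGenRaw n C
  | tinv : LGenRaw n C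

/-- Validity of a raw generator name, given the pairing `σ`. -/
def LGenValid {n : ℕ} {C : Type} (σ : Equiv.Perm (Fin n)) : LGenRaw n C → Prop
  | .a i j => i < j
  | .b i j => i < j ∧ σ i = j
  | _ => True

/-- Generators of the left algebra. -/
def LGen (n : ℕ) (C : Type) (σ : Equiv.Perm (Fin n)) : Type :=
  {g : LGenRaw n C // LGenValid σ g}

/-- The free commutative `𝔽₂`-algebra on the generators of `A^L`. -/
abbrev LPoly (n : ℕ) (C : Type) (σ : Equiv.Perm (Fin n)) : Type :=
  MvPolynomial (LGen n C σ) (ZMod 2)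

/-- The ideal imposing the single relation `t · t⁻¹ = 1`. -/
noncomputable def tRelIdeal (n : ℕ) (C : Type) (σ : Equiv.Perm (Fin n)) :
    Ideal (LPoly n C σ) :=
  Ideal.span {X (⟨LGenRaw.t, trivial⟩ : LGen n C σ) *
    X (⟨LGenRaw.tinv, trivial⟩ : LGen n C σ) - 1}

/-- The left algebra `A^L`: the commutative unital `𝔽₂`-algebra generated by
`p_c, q_c, α_{ij}, β_{ij}, t, t⁻¹` subject only to `t·t⁻¹ = 1`. -/
abbrev ALalg (n : ℕ) (C : Type) (σ : Equiv.Perm (Fin n)) : Type :=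
  LPoly n C σ ⧸ tRelIdeal n C σ

/-- The image of a generator in `A^L`. -/
noncomputable def lgen {n : ℕ} {C : Type} {σ : Equiv.Perm (Fin n)} (g : LGen n C σ) :
    ALalg n C σ :=
  Ideal.Quotient.mk (tRelIdeal n C σ) (X g)

/-- The generator `α_{ij}` of `A^L` (or `0` if `¬ i < j`). -/
noncomputable def lA {n : ℕ} (C : Type) (σ : Equiv.Perm (Fin n)) (i j : Fin n) :
    ALalg n C σ :=
  if h : i < j then lgen (⟨LGenRaw.a i j, h⟩ : LGen n C σ) else 0

/-- The prescribed values of the SFT bracket on `A^L` on pairs of generators. -/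
noncomputable def lBrVal {n : ℕ} {C : Type} [DecidableEq C] (σ : Equiv.Perm (Fin n)) :
    LGen n C σ → LGen n C σ → ALalg n C σ :=
  fun g g' =>
    match g.1, g'.1 with
    | .p c, .q c' => if c = c' then 1 else 0
    | .q c, .p c' => if c = c' then 1 else 0
    | .a i j, .a k l =>
        if j = k then lA C σ i l else if i = l then lA C σ k j else 0
    | .a i j, .b k l =>
        if Xor (i = k ∨ i = l) (j = k ∨ j = l) then lA C σ i j else 0
    | .b k l, .a i j =>
        if Xor (i = k ∨ i = l) (j = k ∨ j = l) then lA C σ i j else 0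
    | _, _ => 0

/-- `Br` is *the* SFT bracket on `A^L`: symmetric, `𝔽₂`-bilinear, satisfying the Leibniz
rule in each variable, and taking the prescribed values on generators. -/
def IsLSFTBracket {n : ℕ} {C : Type} [DecidableEq C] (σ : Equiv.Perm (Fin n))
    (Br : ALalg n C σ → ALalg n C σ → ALalg n C σ) : Prop :=
  (∀ x y, Br x y = Br y x) ∧
    (∀ x y z, Br x (y + z) = Br x y + Br x z) ∧
    (∀ x y z, Br x (y * z) = Br x y * z + y * Br x z) ∧
    (∀ g g' : LGen n C σ, Br (lgen g) (lgen g') = lBrVal σ g g')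
section Infra

variable {n : ℕ} {C : Type} [DecidableEq C] {σ : Equiv.Perm (Fin n)}
variable {Br : ALalg n C σ → ALalg n C σ → ALalg n C σ}

lemma AL_add_self (x : ALalg n C σ) : x + x = 0 := by
  have h : ((2 : ZMod 2) • x) = x + x := two_smul _ _
  rw [show (2 : ZMod 2) = 0 by decide, zero_smul] at h
  exact h.symm

lemma char2_eq {x y : ALalg n C σ} (h : x + y = 0) : x = y := by
  calc x = x + y + y := by rw [add_assoc, AL_add_self, add_zero]
    _ = y := by rw [h, zero_add]

lemma nsmul_two_zero (x : ALalg n C σ) : (2 : ℕ) • x = 0 := by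
  rw [two_smul]; exact AL_add_self x

lemma char2_two : (2 : ALalg n C σ) = 0 := by
  rw [← one_add_one_eq_two]; exact AL_add_self 1

set_option linter.unusedSectionVars false

lemma br_zero_right (hBr : IsLSFTBracket σ Br) (x : ALalg n C σ) : Br x 0 = 0 := by
  have := hBr.2.1 x 0 0
  simpa using this.symm

lemma br_zero_left (hBr : IsLSFTBracket σ Br) (x : ALalg n C σ) : Br 0 x = 0 := by
  rw [hBr.1]; exact br_zero_right hBr x

lemma br_one_right (hBr : IsLSFTBracket σ Br) (x : ALalg n C σ) : Br x 1 = 0 := by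
  have := hBr.2.2.1 x 1 1
  simp only [mul_one, one_mul] at this
  have h2 : Br x 1 + Br x 1 = 0 := AL_add_self _
  -- this : Br x 1 = Br x 1 + Br x 1
  rw [h2] at this; exact this

lemma br_add_left (hBr : IsLSFTBracket σ Br) (x y z : ALalg n C σ) :
    Br (x + y) z = Br x z + Br y z := by
  rw [hBr.1, hBr.2.1, hBr.1 z x, hBr.1 z y]

lemma br_mul_left (hBr : IsLSFTBracket σ Br) (x y z : ALalg n C σ) :
    Br (x * y) z = Br x z * y + x * Br y z := by
  rw [hBr.1, hBr.2.2.1, hBr.1 z x, hBr.1 z y]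

/-- The Jacobiator. -/
noncomputable def Jb (Br : ALalg n C σ → ALalg n C σ → ALalg n C σ)
    (x y z : ALalg n C σ) : ALalg n C σ :=
  Br x (Br y z) + Br y (Br z x) + Br z (Br x y)

lemma Jb_swap12 (hBr : IsLSFTBracket σ Br) (x y z : ALalg n C σ) :
    Jb Br x y z = Jb Br y x z := by
  unfold Jb
  rw [hBr.1 y z, hBr.1 z x, hBr.1 x y]
  ring

lemma Jb_swap23 (hBr : IsLSFTBracket σ Br) (x y z : ALalg n C σ) :
    Jb Br x y z = Jb Br x z y := by
  unfold Jb
  rw [hBr.1 y z, hBr.1 z x, hBr.1 x y]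
  ring

lemma Jb_zero3 (hBr : IsLSFTBracket σ Br) (x y : ALalg n C σ) : Jb Br x y 0 = 0 := by
  unfold Jb
  rw [br_zero_right hBr, br_zero_left hBr, br_zero_left hBr, br_zero_right hBr,
    br_zero_right hBr]
  simp

lemma Jb_one3 (hBr : IsLSFTBracket σ Br) (x y : ALalg n C σ) : Jb Br x y 1 = 0 := by
  unfold Jb
  rw [br_one_right hBr, br_zero_right hBr, hBr.1 1 x, br_one_right hBr,
    br_zero_right hBr, hBr.1 1 (Br x y), br_one_right hBr]
  simp

lemma Jb_add3 (hBr : IsLSFTBracket σ Br) (x y z w : ALalg n C σ) :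
    Jb Br x y (z + w) = Jb Br x y z + Jb Br x y w := by
  unfold Jb
  rw [hBr.2.1, hBr.2.1, br_add_left hBr, hBr.2.1, br_add_left hBr]
  ring

lemma Jb_mul3 (hBr : IsLSFTBracket σ Br) (x y z w : ALalg n C σ) :
    Jb Br x y (z * w) = Jb Br x y z * w + z * Jb Br x y w := by
  unfold Jb
  rw [hBr.2.2.1 y z w, hBr.2.1, hBr.2.2.1 x (Br y z) w, hBr.2.2.1 x z (Br y w)]
  rw [hBr.1 (z * w) x, hBr.2.2.1 x z w, hBr.2.1, hBr.2.2.1 y (Br x z) w,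
    hBr.2.2.1 y z (Br x w)]
  rw [hBr.1 (z * w) (Br x y), hBr.2.2.1 (Br x y) z w]
  rw [hBr.1 z x, hBr.1 w x, hBr.1 z (Br x y)]
  rw [hBr.1 (Br x y) z, hBr.1 (Br x y) w]
  linear_combination (Br y z * Br x w + Br x z * Br y w) * char2_two (n := n) (C := C) (σ := σ)

end Infra
section Main

set_option linter.unusedSectionVars false
set_option maxHeartbeats 2000000
set_option synthInstance.maxHeartbeats 1000000

variable {n : ℕ} {C : Type} [DecidableEq C] {σ : Equiv.Perm (Fin n)}
variable {Br : ALalg n C σ → ALalg n C σ → ALalg n C σ}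

lemma br_ite (hBr : IsLSFTBracket σ Br) (x : ALalg n C σ) (P : Prop) [Decidable P]
    (u v : ALalg n C σ) : Br x (if P then u else v) = if P then Br x u else Br x v :=
  apply_ite _ _ _ _

lemma br_lA (hBr : IsLSFTBracket σ Br) (g : LGen n C σ) (i j : Fin n) :
    Br (lgen g) (lA C σ i j) =
      if h : i < j then lBrVal σ g ⟨LGenRaw.a i j, h⟩ else 0 := by
  unfold lA
  split
  · exact hBr.2.2.2 _ _
  · exact br_zero_right hBr _

lemma br_lA' (hBr : IsLSFTBracket σ Br) (g : LGenRaw n C) (hg : LGenValid σ g) (i j : Fin n) :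
    Br (lgen (⟨g, hg⟩ : LGen n C σ)) (lA C σ i j) =
      if h : i < j then lBrVal σ ⟨g, hg⟩ ⟨LGenRaw.a i j, h⟩ else 0 :=
  br_lA hBr _ i j

lemma jac_gen (hBr : IsLSFTBracket σ Br) :
    ∀ g1 g2 g3 : LGen n C σ, Jb Br (lgen g1) (lgen g2) (lgen g3) = 0 := by
  intro g1 g2 g3
  unfold Jb
  simp only [hBr.2.2.2]
  obtain ⟨g1, h1⟩ := g1
  obtain ⟨g2, h2⟩ := g2
  obtain ⟨g3, h3⟩ := g3
  cases g1 <;> cases g2 <;> cases g3 <;>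
    (have h1' := h1; have h2' := h2; have h3' := h3; simp only [LGenValid] at h1' h2' h3') <;>
    simp only [lBrVal, br_ite hBr, br_lA hBr, br_lA' hBr, br_zero_right hBr, br_one_right hBr] <;>
    first
      | (simp; done)
      | (split_ifs <;> subst_vars <;>
          first
            | (simp [AL_add_self]; done)
            | (exfalso;
               simp only [Fin.lt_def, Fin.ext_iff, Xor, not_or, not_and, not_lt, eq_self_iff_true, not_true, not_false_iff] at * <;>
                 omega))


lemma jac_reduce (hBr : IsLSFTBracket σ Br) (x y : ALalg n C σ)
    (h : ∀ g : LGen n C σ, Jb Br x y (lgen g) = 0) :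
    ∀ z, Jb Br x y z = 0 := by
  intro z
  obtain ⟨p, rfl⟩ := Ideal.Quotient.mk_surjective z
  induction p using MvPolynomial.induction_on with
  | C a =>
      rcases (show a = 0 ∨ a = 1 by revert a; decide) with rfl | rfl
      · rw [map_zero, map_zero]
        exact Jb_zero3 hBr x y
      · rw [map_one, map_one]
        exact Jb_one3 hBr x y
  | add p q hp hq =>
      rw [map_add, Jb_add3 hBr, hp, hq, add_zero]
  | mul_X p g hp =>
      rw [map_mul, Jb_mul3 hBr, hp,
        show (Ideal.Quotient.mk (tRelIdeal n C σ)) (X g) = lgen g from rfl, h g]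
      simp

lemma jac_all (hBr : IsLSFTBracket σ Br) : ∀ x y z : ALalg n C σ, Jb Br x y z = 0 := by
  have h1 : ∀ g1 g2 : LGen n C σ, ∀ z, Jb Br (lgen g1) (lgen g2) z = 0 :=
    fun g1 g2 => jac_reduce hBr _ _ (fun g3 => jac_gen hBr g1 g2 g3)
  have h2 : ∀ (g1 : LGen n C σ) (z : ALalg n C σ), ∀ w, Jb Br (lgen g1) z w = 0 := by
    intro g1 z
    refine jac_reduce hBr _ _ (fun g => ?_)
    rw [Jb_swap23 hBr]
    exact h1 g1 g z
  intro x y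
  refine jac_reduce hBr _ _ (fun g => ?_)
  rw [Jb_swap23 hBr, Jb_swap12 hBr]
  exact h2 g x y
end Main

/-- The SFT bracket on the left algebra satisfies the Jacobi identity. -/
theorem left_bracket_jacobi {n : ℕ} (hn2 : 2 ≤ n) (hnEven : Even n)
    (C : Type) [Fintype C] [DecidableEq C]
    (σ : Equiv.Perm (Fin n)) (hσne : ∀ i, σ i ≠ i) (hσinv : ∀ i, σ (σ i) = i)
    (Br : ALalg n C σ → ALalg n C σ → ALalg n C σ)
    (hBr : IsLSFTBracket σ Br) :
    ∀ x y z : ALalg n C σ, Br x (Br y z) + Br y (Br z x) + Br z (Br x y) = 0 := by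
  intro x y z
  exact jac_all hBr x y z
end

section
/- The middle SFT algebra reduces to the commutative bordered Chekanov–Eliashberg middle algebra: the ideal J ⊆ A^M generated by all generators β^L_{ij}, β^R_{ij}, and α^R_{ij} satisfies d^M(J) ⊆ J (where d^M = d^M_SFT + δ^M_str), and under the induced isomorphism of A^M/J with the polynomial algebra 𝔽₂[α^L_{ij} : 1 ≤ i < j ≤ n], the induced differential on the quotient sends α^L_{ij} to Σ_{i<k<j} α^L_{ik}·α^L_{kj}. -/
open MvPolynomial

/-- The ideal `J ⊆ A^M` generated by all the generators `β^L_{ij}`, `β^R_{ij}`, `α^R_{ij}`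
(i.e. all generators other than the `α^L_{ij}`). -/
noncomputable def nonALIdeal {n : ℕ} (sL sR : Equiv.Perm (Fin n)) : Ideal (AM n sL sR) :=
  Ideal.span {x : AM n sL sR |
    ∃ g : MGen n sL sR, x = X g ∧ ∀ i j : Fin n, g.1 ≠ MGenRaw.aL i j}

section Aux

variable {n : ℕ} (sL sR : Equiv.Perm (Fin n))

lemma genAR_memJ (i j : Fin n) : genAR sL sR i j ∈ nonALIdeal sL sR := by
  unfold genAR
  split
  · exact Ideal.subset_span ⟨_, rfl, fun _ _ h => by cases h⟩
  · exact Ideal.zero_mem _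

lemma genBL_memJ (i j : Fin n) : genBL sL sR i j ∈ nonALIdeal sL sR := by
  unfold genBL
  split
  · exact Ideal.subset_span ⟨_, rfl, fun _ _ h => by cases h⟩
  · exact Ideal.zero_mem _

lemma genBR_memJ (i j : Fin n) : genBR sL sR i j ∈ nonALIdeal sL sR := by
  unfold genBR
  split
  · exact Ideal.subset_span ⟨_, rfl, fun _ _ h => by cases h⟩
  · exact Ideal.zero_mem _

lemma stepGen_memJ [NeZero n] (k : ℕ) : stepGen sL sR k ∈ nonALIdeal sL sR := by
  unfold stepGen
  split
  · exact genBR_memJ sL sR _ _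
  · exact genBL_memJ sL sR _ _

lemma gammaEl_memJ [NeZero n] (hvisit : ∀ i : Fin n, ∃ m, pathSeq sL sR m = i) (i : Fin n) :
    gammaEl sL sR hvisit i ∈ nonALIdeal sL sR :=
  Ideal.sum_mem _ fun k _ => stepGen_memJ sL sR k

lemma sumAR_memJ {P : Fin n → Prop} [DecidablePred P] (f g : Fin n → Fin n × Fin n) :
    (∑ k : Fin n, if P k then genAR sL sR (f k).1 (f k).2 * genAL sL sR (g k).1 (g k).2 else 0)
      ∈ nonALIdeal sL sR := by
  refine Ideal.sum_mem _ fun k _ => ?_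
  split
  · exact Ideal.mul_mem_right _ _ (genAR_memJ sL sR _ _)
  · exact Ideal.zero_mem _

lemma betaSFTVal_memJ (i j : Fin n) : betaSFTVal sL sR i j ∈ nonALIdeal sL sR := by
  unfold betaSFTVal
  refine Ideal.add_mem _ (Ideal.add_mem _ (Ideal.add_mem _ ?_ ?_) ?_) ?_ <;>
    refine Ideal.sum_mem _ fun k _ => ?_ <;>
    · split
      · exact Ideal.mul_mem_left _ _ (genAR_memJ sL sR _ _)
      · exact Ideal.zero_mem _

end Aux

/-- The middle SFT algebra reduces to the commutative bordered
Chekanov–Eliashberg middle algebra: `J` is `d^M`-invariant, and in the quotient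
`A^M/J ≅ 𝔽₂[α^L_ij]` the induced differential sends `α^L_ij` to `Σ_(i<k<j) α^L_ik α^L_kj`. -/
theorem middle_reduces_to_CE {n : ℕ} [NeZero n] (hn2 : 2 ≤ n) (hnEven : Even n)
    (sL sR : Equiv.Perm (Fin n))
    (hsLne : ∀ i, sL i ≠ i) (hsLinv : ∀ i, sL (sL i) = i)
    (hsRne : ∀ i, sR i ≠ i) (hsRinv : ∀ i, sR (sR i) = i)
    (hvisit : ∀ i : Fin n, ∃ m, pathSeq sL sR m = i)
    (Dstr : Derivation (ZMod 2) (AM n sL sR) (AM n sL sR))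
    (hDstr : ∀ g : MGen n sL sR, Dstr (X g) = deltaStrVal sL sR hvisit g)
    (Dsft : Derivation (ZMod 2) (AM n sL sR) (AM n sL sR))
    (hDsft : ∀ g : MGen n sL sR, Dsft (X g) = dSFTVal sL sR g) :
    (∀ x ∈ nonALIdeal sL sR, Dsft x + Dstr x ∈ nonALIdeal sL sR) ∧
      (∀ i j : Fin n, i < j →
        Ideal.Quotient.mk (nonALIdeal sL sR)
            (Dsft (genAL sL sR i j) + Dstr (genAL sL sR i j)) =
          Ideal.Quotient.mk (nonALIdeal sL sR)
            (∑ k : Fin n, if i < k ∧ k < j then genAL sL sR i k * genAL sL sR k j else 0)) := by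
  constructor
  · intro x hx
    induction hx using Submodule.span_induction with
    | mem x hgx =>
      obtain ⟨⟨raw, hval⟩, rfl, hne⟩ := hgx
      erw [hDsft, hDstr]
      cases raw with
      | aL i j => exact absurd rfl (hne i j)
      | aR i j =>
        refine Ideal.add_mem _ (Ideal.add_mem _ ?_ ?_) (Ideal.add_mem _ ?_ ?_)
        · refine Ideal.sum_mem _ fun k _ => ?_
          split
          · exact Ideal.mul_mem_right _ _ (genAR_memJ sL sR _ _)
          · exact Ideal.zero_mem _
        · refine Ideal.sum_mem _ fun k _ => ?_
          split
          · exact Ideal.mul_mem_right _ _ (genAR_memJ sL sR _ _)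
          · exact Ideal.zero_mem _
        · exact Ideal.mul_mem_left _ _ (genAR_memJ sL sR _ _)
        · refine Ideal.sum_mem _ fun k _ => ?_
          split
          · exact Ideal.mul_mem_right _ _ (genAR_memJ sL sR _ _)
          · exact Ideal.zero_mem _
      | bL i j =>
        refine Ideal.add_mem _ (betaSFTVal_memJ sL sR _ _) ?_
        exact Ideal.pow_mem_of_mem _ (genBL_memJ sL sR _ _) 2 (by norm_num)
      | bR i j =>
        refine Ideal.add_mem _ (betaSFTVal_memJ sL sR _ _) ?_
        exact Ideal.pow_mem_of_mem _ (genBR_memJ sL sR _ _) 2 (by norm_num)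
    | zero => simp only [map_zero, add_zero]; exact Ideal.zero_mem _
    | add x y hx hy ihx ihy =>
      simp only [map_add]
      have : Dsft x + Dsft y + (Dstr x + Dstr y)
          = (Dsft x + Dstr x) + (Dsft y + Dstr y) := by ring
      rw [this]
      exact Ideal.add_mem _ ihx ihy
    | smul r x hx ihx =>
      have hx' : x ∈ nonALIdeal sL sR := hx
      rw [smul_eq_mul, Derivation.leibniz, Derivation.leibniz]
      simp only [smul_eq_mul]
      have : r * Dsft x + x * Dsft r + (r * Dstr x + x * Dstr r)
          = r * (Dsft x + Dstr x) + (Dsft r + Dstr r) * x := by ring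
      rw [this]
      exact Ideal.add_mem _ (Ideal.mul_mem_left _ _ ihx) (Ideal.mul_mem_left _ _ hx')
  · intro i j hij
    have hX : genAL sL sR i j = X (⟨MGenRaw.aL i j, hij⟩ : MGen n sL sR) := by
      unfold genAL; rw [dif_pos hij]; rfl
    rw [hX]; erw [hDsft, hDstr]
    rw [Ideal.Quotient.eq]
    have heq : dSFTVal sL sR (⟨MGenRaw.aL i j, hij⟩ : MGen n sL sR)
        + deltaStrVal sL sR hvisit (⟨MGenRaw.aL i j, hij⟩ : MGen n sL sR)
        - (∑ k : Fin n, if i < k ∧ k < j then genAL sL sR i k * genAL sL sR k j else 0)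
        = ((∑ k : Fin n, if j < k then genAL sL sR i k * genAR sL sR j k else 0)
          + (∑ k : Fin n, if k < i then genAL sL sR k j * genAR sL sR k i else 0))
          + (gammaEl sL sR hvisit i + gammaEl sL sR hvisit j) * genAL sL sR i j := by
      show ((∑ k : Fin n, if j < k then genAL sL sR i k * genAR sL sR j k else 0)
          + (∑ k : Fin n, if k < i then genAL sL sR k j * genAR sL sR k i else 0))
        + ((gammaEl sL sR hvisit i + gammaEl sL sR hvisit j) * genAL sL sR i j
          + ∑ k : Fin n, if i < k ∧ k < j then genAL sL sR i k * genAL sL sR k j else 0)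
        - (∑ k : Fin n, if i < k ∧ k < j then genAL sL sR i k * genAL sL sR k j else 0) = _
      ring
    rw [heq]
    refine Ideal.add_mem _ (Ideal.add_mem _ ?_ ?_) ?_
    · refine Ideal.sum_mem _ fun k _ => ?_
      split
      · exact Ideal.mul_mem_left _ _ (genAR_memJ sL sR _ _)
      · exact Ideal.zero_mem _
    · refine Ideal.sum_mem _ fun k _ => ?_
      split
      · exact Ideal.mul_mem_left _ _ (genAR_memJ sL sR _ _)
      · exact Ideal.zero_mem _
    · exact Ideal.mul_mem_right _ _
        (Ideal.add_mem _ (gammaEl_memJ sL sR hvisit i) (gammaEl_memJ sL sR hvisit j))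
end

section
/- The differential d^M on the middle algebra lowers the Maslov grading by 1: for every generator g of A^M, d^M(g) = d^M_SFT(g) + δ^M_str(g) is a homogeneous element of degree |g| − 1 (and hence d^M maps each homogeneous component of degree k into the homogeneous component of degree k − 1). -/
open MvPolynomial

section AuxHomog

variable {n : ℕ} (sL sR : Equiv.Perm (Fin n)) (μ : Fin n → ℤ)

lemma hom_cast {σ : Type*} {w : σ → ℤ} {p : MvPolynomial σ (ZMod 2)} {a b : ℤ}
    (h : MvPolynomial.IsWeightedHomogeneous w p a) (hab : a = b) :
    MvPolynomial.IsWeightedHomogeneous w p b := hab ▸ h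

lemma hom_genAL (i j : Fin n) :
    MvPolynomial.IsWeightedHomogeneous (mWeight sL sR μ) (genAL sL sR i j) (μ i - μ j - 1) := by
  unfold genAL
  split
  · exact isWeightedHomogeneous_X _ _ _
  · exact isWeightedHomogeneous_zero _ _ _

lemma hom_genAR (i j : Fin n) :
    MvPolynomial.IsWeightedHomogeneous (mWeight sL sR μ) (genAR sL sR i j) (μ j - μ i - 1) := by
  unfold genAR
  split
  · exact isWeightedHomogeneous_X _ _ _
  · exact isWeightedHomogeneous_zero _ _ _

lemma hom_genBL (i j : Fin n) :
    MvPolynomial.IsWeightedHomogeneous (mWeight sL sR μ) (genBL sL sR i j) (-1) := by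
  unfold genBL
  split
  · exact isWeightedHomogeneous_X _ _ _
  · exact isWeightedHomogeneous_zero _ _ _

lemma hom_genBR (i j : Fin n) :
    MvPolynomial.IsWeightedHomogeneous (mWeight sL sR μ) (genBR sL sR i j) (-1) := by
  unfold genBR
  split
  · exact isWeightedHomogeneous_X _ _ _
  · exact isWeightedHomogeneous_zero _ _ _

lemma hom_stepGen [NeZero n] (k : ℕ) :
    MvPolynomial.IsWeightedHomogeneous (mWeight sL sR μ) (stepGen sL sR k) (-1) := by
  unfold stepGen
  split
  · exact hom_genBR sL sR μ _ _
  · exact hom_genBL sL sR μ _ _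

lemma hom_gamma [NeZero n] (hvisit : ∀ i : Fin n, ∃ m, pathSeq sL sR m = i) (i : Fin n) :
    MvPolynomial.IsWeightedHomogeneous (mWeight sL sR μ) (gammaEl sL sR hvisit i) (-1) :=
  MvPolynomial.IsWeightedHomogeneous.sum _ _ _ fun k _ => hom_stepGen sL sR μ k

lemma hom_betaSFT (i j : Fin n) :
    MvPolynomial.IsWeightedHomogeneous (mWeight sL sR μ) (betaSFTVal sL sR i j) (-2) := by
  unfold betaSFTVal
  refine (((MvPolynomial.IsWeightedHomogeneous.sum _ _ _ fun k _ => ?_).add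
    (MvPolynomial.IsWeightedHomogeneous.sum _ _ _ fun k _ => ?_)).add
    (MvPolynomial.IsWeightedHomogeneous.sum _ _ _ fun k _ => ?_)).add
    (MvPolynomial.IsWeightedHomogeneous.sum _ _ _ fun k _ => ?_) <;>
  · split
    · exact hom_cast ((hom_genAL sL sR μ _ _).mul (hom_genAR sL sR μ _ _)) (by ring)
    · exact isWeightedHomogeneous_zero _ _ _

/-- A derivation whose values on generators are homogeneous of degree `w i - 1`
lowers weighted degree by one. -/
lemma deriv_lowers_grading {σ : Type*} (w : σ → ℤ)
    (D : Derivation (ZMod 2) (MvPolynomial σ (ZMod 2)) (MvPolynomial σ (ZMod 2)))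
    (hD : ∀ i, MvPolynomial.IsWeightedHomogeneous w (D (X i)) (w i - 1))
    (k : ℤ) (x : MvPolynomial σ (ZMod 2)) (hx : MvPolynomial.IsWeightedHomogeneous w x k) :
    MvPolynomial.IsWeightedHomogeneous w (D x) (k - 1) := by
  classical
  have hDeq : D = MvPolynomial.mkDerivation (ZMod 2) (fun i => D (X i)) :=
    MvPolynomial.derivation_ext fun i => by rw [MvPolynomial.mkDerivation_X]
  rw [hDeq]
  conv_lhs => rw [as_sum x]
  rw [map_sum]
  refine MvPolynomial.IsWeightedHomogeneous.sum _ _ _ fun s hs => ?_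
  rw [MvPolynomial.mkDerivation_monomial]
  rw [← mem_weightedHomogeneousSubmodule]
  refine Submodule.smul_mem _ _ ?_
  rw [mem_weightedHomogeneousSubmodule, Finsupp.sum]
  refine MvPolynomial.IsWeightedHomogeneous.sum _ _ _ fun i hi => ?_
  rw [smul_eq_mul]
  have hle : Finsupp.single i 1 ≤ s :=
    Finsupp.single_le_iff.mpr (Nat.one_le_iff_ne_zero.mpr (Finsupp.mem_support_iff.mp hi))
  have hsum : (s - Finsupp.single i 1) + Finsupp.single i 1 = s := tsub_add_cancel_of_le hle
  have h2 := congrArg (Finsupp.weight w) hsum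
  rw [map_add] at h2
  have h3 : Finsupp.weight w (Finsupp.single i 1) = w i := by
    rw [Finsupp.weight_apply, Finsupp.sum_single_index (by simp)]
    simp
  have h4 : Finsupp.weight w s = k := hx (mem_support_iff.mp hs)
  have h1 : Finsupp.weight w (s - Finsupp.single i 1) = k - w i := by omega
  exact hom_cast ((isWeightedHomogeneous_monomial w _ _ h1).mul (hD i)) (by ring)

end AuxHomog

/-- The differential `d^M` lowers the Maslov grading by `1`. -/
theorem middle_dM_lowers_grading {n : ℕ} [NeZero n] (hn2 : 2 ≤ n) (hnEven : Even n)
    (sL sR : Equiv.Perm (Fin n))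
    (hsLne : ∀ i, sL i ≠ i) (hsLinv : ∀ i, sL (sL i) = i)
    (hsRne : ∀ i, sR i ≠ i) (hsRinv : ∀ i, sR (sR i) = i)
    (hvisit : ∀ i : Fin n, ∃ m, pathSeq sL sR m = i)
    (μ : Fin n → ℤ)
    (Dstr : Derivation (ZMod 2) (AM n sL sR) (AM n sL sR))
    (hDstr : ∀ g : MGen n sL sR, Dstr (X g) = deltaStrVal sL sR hvisit g)
    (Dsft : Derivation (ZMod 2) (AM n sL sR) (AM n sL sR))
    (hDsft : ∀ g : MGen n sL sR, Dsft (X g) = dSFTVal sL sR g) :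
    (∀ g : MGen n sL sR,
        MvPolynomial.IsWeightedHomogeneous (mWeight sL sR μ)
          (Dsft (X g) + Dstr (X g)) (mWeight sL sR μ g - 1)) ∧
      (∀ (k : ℤ) (x : AM n sL sR),
        MvPolynomial.IsWeightedHomogeneous (mWeight sL sR μ) x k →
          MvPolynomial.IsWeightedHomogeneous (mWeight sL sR μ) (Dsft x + Dstr x) (k - 1)) := by
  classical
  have part1 : ∀ g : MGen n sL sR,
      MvPolynomial.IsWeightedHomogeneous (mWeight sL sR μ)
        (Dsft (X g) + Dstr (X g)) (mWeight sL sR μ g - 1) := by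
    intro g
    rw [hDsft, hDstr]
    obtain ⟨raw, hv⟩ := g
    cases raw with
    | aL i j =>
        simp only [dSFTVal, deltaStrVal, mWeight]
        refine (MvPolynomial.IsWeightedHomogeneous.add ?_ ?_).add
          (MvPolynomial.IsWeightedHomogeneous.add ?_ ?_)
        · refine MvPolynomial.IsWeightedHomogeneous.sum _ _ _ fun k _ => ?_
          split
          · exact hom_cast ((hom_genAL sL sR μ _ _).mul (hom_genAR sL sR μ _ _)) (by ring)
          · exact isWeightedHomogeneous_zero _ _ _
        · refine MvPolynomial.IsWeightedHomogeneous.sum _ _ _ fun k _ => ?_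
          split
          · exact hom_cast ((hom_genAL sL sR μ _ _).mul (hom_genAR sL sR μ _ _)) (by ring)
          · exact isWeightedHomogeneous_zero _ _ _
        · exact hom_cast (((hom_gamma sL sR μ hvisit i).add (hom_gamma sL sR μ hvisit j)).mul
            (hom_genAL sL sR μ i j)) (by ring)
        · refine MvPolynomial.IsWeightedHomogeneous.sum _ _ _ fun k _ => ?_
          split
          · exact hom_cast ((hom_genAL sL sR μ _ _).mul (hom_genAL sL sR μ _ _)) (by ring)
          · exact isWeightedHomogeneous_zero _ _ _
    | aR i j =>
        simp only [dSFTVal, deltaStrVal, mWeight]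
        refine (MvPolynomial.IsWeightedHomogeneous.add ?_ ?_).add
          (MvPolynomial.IsWeightedHomogeneous.add ?_ ?_)
        · refine MvPolynomial.IsWeightedHomogeneous.sum _ _ _ fun k _ => ?_
          split
          · exact hom_cast ((hom_genAR sL sR μ _ _).mul (hom_genAL sL sR μ _ _)) (by ring)
          · exact isWeightedHomogeneous_zero _ _ _
        · refine MvPolynomial.IsWeightedHomogeneous.sum _ _ _ fun k _ => ?_
          split
          · exact hom_cast ((hom_genAR sL sR μ _ _).mul (hom_genAL sL sR μ _ _)) (by ring)
          · exact isWeightedHomogeneous_zero _ _ _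
        · exact hom_cast (((hom_gamma sL sR μ hvisit i).add (hom_gamma sL sR μ hvisit j)).mul
            (hom_genAR sL sR μ i j)) (by ring)
        · refine MvPolynomial.IsWeightedHomogeneous.sum _ _ _ fun k _ => ?_
          split
          · exact hom_cast ((hom_genAR sL sR μ _ _).mul (hom_genAR sL sR μ _ _)) (by ring)
          · exact isWeightedHomogeneous_zero _ _ _
    | bL i j =>
        simp only [dSFTVal, deltaStrVal, mWeight]
        refine MvPolynomial.IsWeightedHomogeneous.add
          (hom_cast (hom_betaSFT sL sR μ i j) (by ring)) ?_
        rw [sq]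
        exact hom_cast ((hom_genBL sL sR μ i j).mul (hom_genBL sL sR μ i j)) (by ring)
    | bR i j =>
        simp only [dSFTVal, deltaStrVal, mWeight]
        refine MvPolynomial.IsWeightedHomogeneous.add
          (hom_cast (hom_betaSFT sL sR μ i j) (by ring)) ?_
        rw [sq]
        exact hom_cast ((hom_genBR sL sR μ i j).mul (hom_genBR sL sR μ i j)) (by ring)
  refine ⟨part1, fun k x hx => ?_⟩
  have happ : ∀ y : AM n sL sR, Dsft y + Dstr y = (Dsft + Dstr) y := fun y => rfl
  rw [happ]
  refine deriv_lowers_grading (mWeight sL sR μ) (Dsft + Dstr) (fun g => ?_) k x hx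
  rw [← happ]
  exact part1 g
end
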